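/- Let p be a positive even integer such that p/2 is not a perfect square. Then there exists an integer r, relatively prime to 2p, such that for every prime s with s ≡ r (mod 2p), neither p/2 nor -p/2 is a quadratic residue modulo s. -/

import Mathlib

private lemma copr_of_mod_one {a m : ℕ} (h : a % m = 1 % m) : Nat.Coprime a m := by
  have h2 : Nat.gcd m a = Nat.gcd m 1 := by
    rw [Nat.gcd_rec m a, h, ← Nat.gcd_rec]
  have : Nat.gcd m a = 1 := by simpa using h2
  simpa [Nat.Coprime, Nat.gcd_comm] using this

private lemma isSquare_of_even_fact {n : ℕ} (hn : n ≠ 0)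
    (h : ∀ p, Even (n.factorization p)) : IsSquare n := by
  refine ⟨n.factorization.prod fun p e => p ^ (e / 2), ?_⟩
  conv_lhs => rw [← Nat.factorization_prod_pow_eq_self hn]
  rw [Finsupp.prod, Finsupp.prod, ← Finset.prod_mul_distrib]
  refine Finset.prod_congr rfl fun p hp => ?_
  rw [← pow_add]
  congr 1
  obtain ⟨k, hk⟩ := h p
  omega

private lemma exists_jacobi_neg_one {n : ℕ} (hn : n ≠ 0) (hns : ¬ IsSquare n) :
    ∃ b : ℕ, b % 4 = 1 ∧ Nat.Coprime b (4 * n) ∧ jacobiSym (n : ℤ) b = -1 := by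
  obtain ⟨ℓ, hℓp, hℓe⟩ : ∃ ℓ, ℓ.Prime ∧ Odd (n.factorization ℓ) := by
    by_contra hcon
    push_neg at hcon
    refine hns (isSquare_of_even_fact hn fun p => ?_)
    by_cases hp : p.Prime
    · exact Nat.not_odd_iff_even.mp (hcon p hp)
    · rw [Nat.factorization_eq_zero_of_not_prime n hp]; exact Even.zero
  by_cases hℓ2 : ℓ = 2
  · -- Case B
    subst hℓ2
    set e := n.factorization 2 with he
    set u := ordCompl[2] n with hu
    have hu0 : u ≠ 0 := (Nat.ordCompl_pos 2 hn).ne'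
    have hu2 : ¬ 2 ∣ u := Nat.not_dvd_ordCompl Nat.prime_two hn
    have huodd : Odd u := Nat.odd_iff.mpr (by omega)
    have hco : Nat.Coprime 8 u := by
      have : Nat.Coprime 2 u := Nat.coprime_two_left.mpr huodd
      simpa using (this.pow_left 3)
    obtain ⟨b, hb8, hbu⟩ := Nat.chineseRemainder hco 5 1
    have hb8' : b % 8 = 5 := by simpa [Nat.ModEq] using hb8
    have hb4 : b % 4 = 1 := by omega
    have hbodd : b % 2 = 1 := by omega
    have hbu' : b % u = 1 % u := hbu
    have cop2 : Nat.Coprime b 2 := Nat.coprime_two_right.mpr (Nat.odd_iff.mpr hbodd)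
    have copu : Nat.Coprime b u := copr_of_mod_one hbu'
    have hneq : 2 ^ e * u = n := Nat.ordProj_mul_ordCompl_eq_self n 2
    refine ⟨b, hb4, ?_, ?_⟩
    · have h4n : 4 * n = 2 ^ (e + 2) * u := by rw [← hneq, pow_add]; ring
      rw [h4n]
      exact Nat.Coprime.mul_right (cop2.pow_right _) copu
    · have hnz : (n : ℤ) = 2 ^ e * (u : ℤ) := by exact_mod_cast hneq.symm
      have h2b : jacobiSym 2 b = -1 := by
        rw [jacobiSym.at_two (Nat.odd_iff.mpr hbodd), ZMod.χ₈_nat_mod_eight, hb8']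
        decide
      have hub : jacobiSym (u : ℤ) b = 1 := by
        rw [jacobiSym.quadratic_reciprocity_one_mod_four' huodd hb4]
        have : ((b : ℤ) % u) = ((1 : ℤ) % u) := by exact_mod_cast congrArg (Nat.cast : ℕ → ℤ) hbu'
        rw [jacobiSym.mod_left' this, jacobiSym.one_left]
      rw [hnz, jacobiSym.mul_left, jacobiSym.pow_left, h2b, hub, Odd.neg_one_pow hℓe, mul_one]
  · -- Case A
    have hℓodd : Odd ℓ := hℓp.odd_of_ne_two hℓ2
    haveI : Fact ℓ.Prime := ⟨hℓp⟩
    set v := n.factorization ℓ with hv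
    set w' := ordCompl[ℓ] n with hw'
    have hw'0 : w' ≠ 0 := (Nat.ordCompl_pos ℓ hn).ne'
    have hℓw' : ¬ ℓ ∣ w' := Nat.not_dvd_ordCompl hℓp hn
    set e2 := w'.factorization 2 with he2
    set w := ordCompl[2] w' with hw
    have hw0 : w ≠ 0 := (Nat.ordCompl_pos 2 hw'0).ne'
    have hw2 : ¬ 2 ∣ w := Nat.not_dvd_ordCompl Nat.prime_two hw'0
    have hwodd : Odd w := Nat.odd_iff.mpr (by omega)
    have hweq : 2 ^ e2 * w = w' := Nat.ordProj_mul_ordCompl_eq_self w' 2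
    obtain ⟨a, ha⟩ := FiniteField.exists_nonsquare (F := ZMod ℓ)
      (by rw [ZMod.ringChar_zmod_n]; exact_mod_cast hℓ2)
    have ha0 : a ≠ 0 := fun h0 => ha ⟨0, by simp [h0]⟩
    set c := a.val with hc
    have hca : (c : ZMod ℓ) = a := by simp [hc, ZMod.natCast_val, ZMod.cast_id]
    have hco : Nat.Coprime (8 * w') ℓ := by
      refine Nat.Coprime.symm ((Nat.Prime.coprime_iff_not_dvd hℓp).mpr ?_)
      intro hdvd
      rcases (Nat.Prime.dvd_mul hℓp).mp hdvd with h8 | hw''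
      · have h2 : ℓ ∣ 2 := hℓp.dvd_of_dvd_pow (show ℓ ∣ 2 ^ 3 by simpa using h8)
        exact hℓ2 ((Nat.prime_dvd_prime_iff_eq hℓp Nat.prime_two).mp h2)
      · exact hℓw' hw''
    obtain ⟨b, hb1, hbc⟩ := Nat.chineseRemainder hco 1 c
    have h8w'8 : (8 : ℕ) ≤ 8 * w' := Nat.le_mul_of_pos_right 8 (Nat.pos_of_ne_zero hw'0)
    have hb1'' : b % (8 * w') = 1 % (8 * w') := hb1
    have hb1' : b % (8 * w') = 1 := by rw [hb1'', Nat.mod_eq_of_lt (by omega)]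
    have hb8 : b % 8 = 1 := by
      rw [← Nat.mod_mod_of_dvd b (dvd_mul_right 8 w'), hb1']
    have hb4 : b % 4 = 1 := by omega
    have hbodd : b % 2 = 1 := by omega
    have hbw' : b % w' = 1 % w' := Nat.ModEq.of_dvd (dvd_mul_left w' 8) hb1
    have hww' : w ∣ w' := hweq ▸ dvd_mul_left w (2 ^ e2)
    have hbw : b % w = 1 % w := Nat.ModEq.of_dvd (hww'.trans (dvd_mul_left w' 8)) hb1
    have hba : (b : ZMod ℓ) = a := by
      rw [(ZMod.natCast_eq_natCast_iff b c ℓ).mpr hbc, hca]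
    have copℓ : Nat.Coprime b ℓ := by
      refine Nat.Coprime.symm ((Nat.Prime.coprime_iff_not_dvd hℓp).mpr ?_)
      intro hdvd
      exact ha0 (hba ▸ (ZMod.natCast_eq_zero_iff b ℓ).mpr hdvd)
    have cop2 : Nat.Coprime b 2 := Nat.coprime_two_right.mpr (Nat.odd_iff.mpr hbodd)
    have copw' : Nat.Coprime b w' := copr_of_mod_one hbw'
    have hneq : ℓ ^ v * w' = n := Nat.ordProj_mul_ordCompl_eq_self n ℓ
    refine ⟨b, hb4, ?_, ?_⟩
    · have h4n : 4 * n = 2 ^ 2 * (ℓ ^ v * w') := by rw [hneq]; norm_num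
      rw [h4n]
      exact (cop2.pow_right 2).mul_right ((copℓ.pow_right v).mul_right copw')
    · have hnz : (n : ℤ) = (ℓ : ℤ) ^ v * ((2 : ℤ) ^ e2 * (w : ℤ)) := by
        rw [← hneq, ← hweq]; push_cast; ring
      have hJℓ : jacobiSym (ℓ : ℤ) b = -1 := by
        rw [jacobiSym.quadratic_reciprocity_one_mod_four' hℓodd hb4]
        exact ZMod.nonsquare_iff_jacobiSym_eq_neg_one.mpr (by rwa [Int.cast_natCast, hba])
      have h2b : jacobiSym 2 b = 1 := by
        rw [jacobiSym.at_two (Nat.odd_iff.mpr hbodd), ZMod.χ₈_nat_mod_eight, hb8]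
        decide
      have hwb : jacobiSym (w : ℤ) b = 1 := by
        rw [jacobiSym.quadratic_reciprocity_one_mod_four' hwodd hb4]
        have hcast : ((b : ℤ) % w) = ((1 : ℤ) % w) := by
          exact_mod_cast congrArg (Nat.cast : ℕ → ℤ) hbw
        rw [jacobiSym.mod_left' hcast, jacobiSym.one_left]
      rw [hnz, jacobiSym.mul_left, jacobiSym.pow_left, jacobiSym.mul_left, jacobiSym.pow_left,
        hJℓ, h2b, hwb, Odd.neg_one_pow hℓe]
      ring

/-- If `p` is a positive even integer such that `p/2` is not a perfect
square, then there exists an integer `r`, relatively prime to `2p`, such that for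
every prime `s` with `s ≡ r (mod 2p)`, neither `p/2` nor `-p/2` is a quadratic
residue modulo `s`. -/
theorem stmt0 (p : ℤ) (hp : 0 < p) (hpe : 2 ∣ p)
    (hns : ¬ ∃ m : ℤ, m ^ 2 = p / 2) :
    ∃ r : ℤ, IsCoprime r (2 * p) ∧
      ∀ s : ℕ, s.Prime → (s : ℤ) ≡ r [ZMOD 2 * p] →
        (¬ ∃ x : ℤ, x ^ 2 ≡ p / 2 [ZMOD (s : ℤ)]) ∧
        (¬ ∃ x : ℤ, x ^ 2 ≡ -(p / 2) [ZMOD (s : ℤ)]) := by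
  obtain ⟨k, hk⟩ := hpe
  have hk0 : 0 < k := by omega
  have hq : p / 2 = k := by rw [hk]; exact Int.mul_ediv_cancel_left k two_ne_zero
  set n := k.toNat with hn
  have hkn : (n : ℤ) = k := Int.toNat_of_nonneg hk0.le
  have hn0 : n ≠ 0 := by omega
  have hns' : ¬ IsSquare n := by
    rintro ⟨m, hm⟩
    refine hns ⟨(m : ℤ), ?_⟩
    rw [hq, ← hkn, hm]
    push_cast
    ring
  obtain ⟨b, hb4, hcop, hJ⟩ := exists_jacobi_neg_one hn0 hns'
  have hbodd : b % 2 = 1 := by omega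
  have h2p : 2 * p = ((4 * n : ℕ) : ℤ) := by push_cast [hkn]; omega
  refine ⟨(b : ℤ), ?_, ?_⟩
  · rw [h2p, Int.isCoprime_iff_gcd_eq_one]
    rw [Int.gcd_natCast_natCast]; exact hcop
  · intro s hsp hs
    rw [h2p] at hs
    have hsm : s % (4 * n) = b % (4 * n) := by
      have h := hs
      unfold Int.ModEq at h
      rw [← Int.natCast_mod, ← Int.natCast_mod, Int.natCast_inj] at h
      exact h
    have hs4 : s % 4 = 1 := by
      rw [← Nat.mod_mod_of_dvd s (dvd_mul_right 4 n), hsm,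
        Nat.mod_mod_of_dvd b (dvd_mul_right 4 n), hb4]
    have hs2 : s % 2 = 1 := by omega
    have hsodd : Odd s := Nat.odd_iff.mpr hs2
    have hbo : Odd b := Nat.odd_iff.mpr hbodd
    have hmodr : (4 * (n : ℤ).natAbs) = 4 * n := by simp
    have hJs : jacobiSym (n : ℤ) s = -1 := by
      have e1 := jacobiSym.mod_right (n : ℤ) hsodd
      have e2 := jacobiSym.mod_right (n : ℤ) hbo
      rw [hmodr] at e1 e2
      rw [e1, hsm, ← e2, hJ]
    have hJs' : jacobiSym (-(n : ℤ)) s = -1 := by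
      rw [jacobiSym.neg _ hsodd, ZMod.χ₄_nat_one_mod_four hs4, hJs, one_mul]
    have hpq : p / 2 = (n : ℤ) := by rw [hq, hkn]
    constructor
    · rintro ⟨x, hx⟩
      apply ZMod.nonsquare_of_jacobiSym_eq_neg_one hJs
      rw [hpq] at hx
      have hcast : ((x ^ 2 : ℤ) : ZMod s) = (((n : ℤ) : ℤ) : ZMod s) :=
        (ZMod.intCast_eq_intCast_iff _ _ _).mpr hx
      exact ⟨(x : ZMod s), by rw [← hcast]; push_cast; ring⟩
    · rintro ⟨x, hx⟩
      apply ZMod.nonsquare_of_jacobiSym_eq_neg_one hJs'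
      rw [hpq] at hx
      have hcast : ((x ^ 2 : ℤ) : ZMod s) = ((-(n : ℤ) : ℤ) : ZMod s) :=
        (ZMod.intCast_eq_intCast_iff _ _ _).mpr hx
      exact ⟨(x : ZMod s), by rw [← hcast]; push_cast; ring⟩
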